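/- arXiv:2601.03402 — 3 statements merged into one kernel-verified Lean document; each statement's English description precedes it below -/
import Mathlib

section
/- Let C, D be constants with 0 < C ≤ D < 1 and let ω ∈ [C, D]. Suppose ξ is a real number whose fractional part lies in [1/6, 5/6]. Then |ω + (1−ω)e^{−2πiξ}|² ≤ 1 − C(1−D), and in particular |ω + (1−ω)e^{−2πiξ}| ≤ γ where γ = √(1 − C(1−D)) < 1. -/
lemma cos_le_half {x : ℝ} (h1 : Real.pi / 3 ≤ x) (h2 : x ≤ 5 * Real.pi / 3) :
    Real.cos x ≤ 1 / 2 := by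
  have hpi := Real.pi_pos
  rcases le_or_gt x Real.pi with h | h
  · have := Real.cos_le_cos_of_nonneg_of_le_pi (by positivity) h h1
    rwa [Real.cos_pi_div_three] at this
  · have heq : Real.cos x = Real.cos (2 * Real.pi - x) := by
      rw [Real.cos_sub]; simp [Real.cos_two_pi, Real.sin_two_pi]
    rw [heq]
    have := Real.cos_le_cos_of_nonneg_of_le_pi (x := Real.pi / 3) (y := 2 * Real.pi - x)
      (by positivity) (by linarith) (by linarith)
    rwa [Real.cos_pi_div_three] at this

theorem stmt13 (C D ω ξ : ℝ) (hC : 0 < C) (hCD : C ≤ D) (hD : D < 1)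
    (hω : ω ∈ Set.Icc C D)
    (hξ : Int.fract ξ ∈ Set.Icc (1 / 6 : ℝ) (5 / 6)) :
    ‖(ω : ℂ) + ((1 : ℂ) - ω) * Complex.exp (-(2 * Real.pi * Complex.I * ξ))‖ ^ 2
        ≤ 1 - C * (1 - D) ∧
      ‖(ω : ℂ) + ((1 : ℂ) - ω) * Complex.exp (-(2 * Real.pi * Complex.I * ξ))‖
        ≤ Real.sqrt (1 - C * (1 - D)) ∧
      Real.sqrt (1 - C * (1 - D)) < 1 := by
  obtain ⟨hωC, hωD⟩ := hω
  obtain ⟨hf1, hf2⟩ := hξ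
  have hpi := Real.pi_pos
  have hcos : Real.cos (2 * Real.pi * ξ) ≤ 1 / 2 := by
    have h1 : Real.cos (2 * Real.pi * ξ) = Real.cos (2 * Real.pi * Int.fract ξ) := by
      have h2 : (2 : ℝ) * Real.pi * ξ = 2 * Real.pi * Int.fract ξ + (⌊ξ⌋ : ℤ) * (2 * Real.pi) := by
        rw [Int.fract]; push_cast; ring
      rw [h2, Real.cos_add_int_mul_two_pi]
    rw [h1]
    exact cos_le_half (by nlinarith) (by nlinarith)
  have hc' : Real.cos (-(2 * Real.pi * ξ)) ≤ 1 / 2 := by rwa [Real.cos_neg]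
  have hprod : C * (1 - D) ≤ ω * (1 - ω) :=
    mul_le_mul hωC (by linarith) (by linarith) (by linarith)
  have hkey : ‖(ω : ℂ) + ((1 : ℂ) - ω) * Complex.exp (-(2 * Real.pi * Complex.I * ξ))‖ ^ 2
      ≤ 1 - C * (1 - D) := by
    have hrw : ((ω : ℂ) + ((1 : ℂ) - ω) * Complex.exp (-(2 * Real.pi * Complex.I * ξ)))
        = ((ω + (1 - ω) * Real.cos (-(2 * Real.pi * ξ)) : ℝ) : ℂ)
          + ((1 - ω) * Real.sin (-(2 * Real.pi * ξ)) : ℝ) * Complex.I := by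
      have h3 : (-(2 * Real.pi * Complex.I * ξ)) = ((-(2 * Real.pi * ξ) : ℝ) : ℂ) * Complex.I := by
        push_cast; ring
      rw [h3, Complex.exp_mul_I, ← Complex.ofReal_cos, ← Complex.ofReal_sin]
      push_cast; ring
    rw [hrw, Complex.sq_norm, Complex.normSq_add_mul_I]
    have hsc := Real.sin_sq_add_cos_sq (-(2 * Real.pi * ξ))
    have hnn : (0:ℝ) ≤ 2 * ω * (1 - ω) := by nlinarith
    nlinarith [mul_le_mul_of_nonneg_left hc' hnn, sq_nonneg (1 - ω),
      mul_le_mul_of_nonneg_left hsc.le (sq_nonneg (1 - ω)),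
      mul_le_mul_of_nonneg_left hsc.ge (sq_nonneg (1 - ω))]
  have hpos : 0 < 1 - C * (1 - D) := by nlinarith
  refine ⟨hkey, ?_, ?_⟩
  · calc ‖(ω : ℂ) + ((1 : ℂ) - ω) * Complex.exp (-(2 * Real.pi * Complex.I * ξ))‖
        = Real.sqrt (‖(ω : ℂ) + ((1 : ℂ) - ω) * Complex.exp (-(2 * Real.pi * Complex.I * ξ))‖ ^ 2) :=
          (Real.sqrt_sq (norm_nonneg _)).symm
      _ ≤ Real.sqrt (1 - C * (1 - D)) := Real.sqrt_le_sqrt hkey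
  · have h1 : 0 < C * (1 - D) := by nlinarith
    calc Real.sqrt (1 - C * (1 - D)) < Real.sqrt 1 :=
          Real.sqrt_lt_sqrt hpos.le (by linarith)
        _ = 1 := Real.sqrt_one
end

section
/- Let {Xₖ}ₖ≥₁ be a sequence of independent random variables on a probability space with finite variances such that Σₖ Var(Xₖ)/k² < ∞. Then almost surely (1/n)·(Σₖ₌₁ⁿ Xₖ − Σₖ₌₁ⁿ E[Xₖ]) → 0 as n → ∞. -/
open MeasureTheory ProbabilityTheory Filter Finset
open scoped ENNReal

-- Kronecker's lemma
lemma my_kronecker {a : ℕ → ℝ} {L : ℝ}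
    (h : Tendsto (fun n => ∑ k ∈ Finset.range n, a k / ((k : ℝ) + 1)) atTop (nhds L)) :
    Tendsto (fun n : ℕ => (1 / (n : ℝ)) * ∑ k ∈ Finset.range n, a k) atTop (nhds 0) := by
  set b : ℕ → ℝ := fun n => ∑ k ∈ Finset.range n, a k / ((k : ℝ) + 1) with hb
  have key : ∀ n : ℕ, ∑ k ∈ Finset.range n, a k
      = n * b n - ∑ k ∈ Finset.range n, b k := by
    intro n
    induction n with
    | zero => simp [hb]
    | succ n ih =>
      have hbs : b (n + 1) = b n + a n / ((n : ℝ) + 1) := Finset.sum_range_succ _ n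
      rw [Finset.sum_range_succ, ih, Finset.sum_range_succ (f := b), hbs]
      push_cast
      field_simp
      ring
  have h2 := h.cesaro
  have h3 : Tendsto (fun n : ℕ => b n - (n : ℝ)⁻¹ * ∑ k ∈ Finset.range n, b k)
      atTop (nhds (L - L)) := h.sub h2
  rw [sub_self] at h3
  apply h3.congr'
  filter_upwards [eventually_gt_atTop 0] with n hn
  have hn' : (n : ℝ) ≠ 0 := Nat.cast_ne_zero.mpr hn.ne'
  rw [key]
  field_simp

lemma my_variance_sub_const {Ω : Type*} [MeasureSpace Ω] [IsProbabilityMeasure (ℙ : Measure Ω)]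
    {X : Ω → ℝ} (hX : Integrable X ℙ) (c : ℝ) :
    variance (fun ω => X ω - c) ℙ = variance X ℙ := by
  rw [variance, variance, evariance, evariance]
  congr 1
  apply lintegral_congr
  intro ω
  rw [integral_sub hX (integrable_const c), integral_const]
  simp [measure_univ]


/-- Kolmogorov's strong law of large numbers: if `X 1, X 2, …` are independent
random variables with `∑ Var(X k) / k² < ∞`, then almost surely
`(1/n) (∑_{k=1}^n X k − ∑_{k=1}^n E[X k]) → 0`.  (Indices start at `0`, so the
`k`-th variable is weighted by `1/(k+1)²`.) -/
theorem stmt17 {Ω : Type*} [MeasureSpace Ω] [IsProbabilityMeasure (ℙ : Measure Ω)]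
    (X : ℕ → Ω → ℝ) (hmeas : ∀ k, Measurable (X k))
    (hindep : iIndepFun X ℙ)
    (hL2 : ∀ k, MemLp (X k) 2 ℙ)
    (hvar : Summable (fun k => variance (X k) ℙ / ((k : ℝ) + 1) ^ 2)) :
    ∀ᵐ ω ∂ℙ, Tendsto
      (fun n : ℕ => (1 / (n : ℝ)) *
        ((∑ k ∈ Finset.range n, X k ω) - ∑ k ∈ Finset.range n, ∫ x, X k x ∂ℙ))
      atTop (nhds 0) := by
  set c : ℕ → ℝ := fun k => ∫ x, X k x ∂ℙ with hc
  set Y : ℕ → Ω → ℝ := fun k ω => ((k : ℝ) + 1)⁻¹ * (X k ω - c k) with hYdef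
  have hYmeas : ∀ k, Measurable (Y k) :=
    fun k => measurable_const.mul ((hmeas k).sub measurable_const)
  have hYsm : ∀ k, StronglyMeasurable (Y k) := fun k => (hYmeas k).stronglyMeasurable
  have hYL2 : ∀ k, MemLp (Y k) 2 ℙ :=
    fun k => ((hL2 k).sub (memLp_const (c k))).const_mul _
  have hYint : ∀ k, Integrable (Y k) ℙ := fun k => (hYL2 k).integrable one_le_two
  have hXint : ∀ k, Integrable (X k) ℙ := fun k => (hL2 k).integrable one_le_two
  have hYmean : ∀ k, ∫ x, Y k x ∂ℙ = 0 := by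
    intro k
    simp only [hYdef]
    rw [integral_const_mul, integral_sub (hXint k) (integrable_const _), integral_const]
    simp [measure_univ]
    exact Or.inr (sub_self (c k))
  have hYindep : iIndepFun Y ℙ := by
    have := hindep.comp (fun k x => ((k : ℝ) + 1)⁻¹ * (x - c k))
      (fun k => measurable_const.mul (measurable_id.sub measurable_const))
    exact this
  have hYvar : ∀ k, variance (Y k) ℙ = variance (X k) ℙ / ((k : ℝ) + 1) ^ 2 := by
    intro k
    have h1 : Y k = fun ω => ((k : ℝ) + 1)⁻¹ * ((fun ω => X k ω - c k) ω) := rfl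
    rw [h1, variance_const_mul, my_variance_sub_const (hXint k)]
    rw [div_eq_inv_mul, ← inv_pow]
  set C : ℝ := ∑' k, variance (X k) ℙ / ((k : ℝ) + 1) ^ 2 with hC
  have hvnn : ∀ k, 0 ≤ variance (X k) ℙ / ((k : ℝ) + 1) ^ 2 := by
    intro k; exact div_nonneg (variance_nonneg _ _) (by positivity)
  have hCk : ∀ n, ∑ k ∈ Finset.range n, variance (Y k) ℙ ≤ C := by
    intro n
    simp_rw [hYvar]
    exact Summable.sum_le_tsum (Finset.range n) (fun k _ => hvnn k) hvar
  set S : ℕ → Ω → ℝ := fun n ω => ∑ k ∈ Finset.range n, Y k ω with hS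
  set ℱ := Filtration.natural Y hYsm with hF
  -- martingale
  have hadap : StronglyAdapted ℱ fun n => S (n + 1) := by
    intro n
    apply Finset.stronglyMeasurable_fun_sum
    intro k hk
    exact ((Filtration.stronglyAdapted_natural hYsm) k).mono
      (ℱ.mono (Nat.lt_succ_iff.mp (Finset.mem_range.mp hk)))
  have hmart : Martingale (fun n => S (n + 1)) ℱ ℙ := by
    refine ⟨hadap, fun i j hij => ?_⟩
    have e1 : (fun n => S (n + 1)) j = ∑ k ∈ Finset.range (j + 1), Y k := by
      ext ω; simp [hS]
    rw [e1]
    refine (condExp_finset_sum (fun k _ => hYint k) _).trans ?_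
    have e2 : ∀ k ∈ Finset.range (j + 1),
        (ℙ : Measure Ω)[Y k|ℱ i] =ᵐ[ℙ] fun ω => if k ≤ i then Y k ω else 0 := by
      intro k hk
      by_cases hki : k ≤ i
      · simp only [if_pos hki]
        rw [condExp_of_stronglyMeasurable (ℱ.le i)
          (((Filtration.stronglyAdapted_natural hYsm) k).mono (ℱ.mono hki)) (hYint k)]
      · simp only [if_neg hki]
        have h0 := hYindep.condExp_natural_ae_eq_of_lt hYsm (lt_of_not_ge hki)
        refine h0.trans ?_
        rw [hYmean k]
    refine (eventuallyEq_sum e2).trans ?_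
    apply Filter.EventuallyEq.of_eq
    funext ω
    have heq : (Finset.range (j + 1)).filter (fun k => k ≤ i) = Finset.range (i + 1) := by
      ext k; simp only [Finset.mem_filter, Finset.mem_range]; omega
    have : ∑ k ∈ Finset.range (j + 1), (if k ≤ i then Y k ω else 0)
        = ∑ k ∈ Finset.range (i + 1), Y k ω := by
      rw [← Finset.sum_filter, heq]
    simp only [Finset.sum_apply]
    exact this
  -- L² and L¹ bounds
  have hSfun : ∀ n, S n = ∑ k ∈ Finset.range n, Y k := by
    intro n; ext ω; simp [hS]
  have hSL2 : ∀ n, MemLp (S n) 2 ℙ := by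
    intro n; rw [hSfun n]; exact memLp_finset_sum' _ (fun k _ => hYL2 k)
  have hSint : ∀ n, Integrable (S n) ℙ := fun n => (hSL2 n).integrable one_le_two
  have hSmean : ∀ n, ∫ x, S n x ∂ℙ = 0 := by
    intro n
    simp only [hS]
    rw [integral_finset_sum _ (fun k _ => hYint k)]
    simp [hYmean]
  have hSvar : ∀ n, variance (S n) ℙ ≤ C := by
    intro n
    rw [hSfun n, IndepFun.variance_sum (fun k _ => hYL2 k)
      (fun a _ b _ hab => hYindep.indepFun hab)]
    exact hCk n
  have hCnn : 0 ≤ C := tsum_nonneg hvnn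
  have habsle : ∀ n, ∫ x, |S n x| ∂ℙ ≤ Real.sqrt C := by
    intro n
    have h0 : 0 ≤ ∫ x, |S n x| ∂ℙ := integral_nonneg fun ω => abs_nonneg _
    rw [Real.le_sqrt h0 hCnn]
    have habs2 : MemLp (fun x => |S n x|) 2 ℙ := by
      have := (hSL2 n).norm
      simpa [Real.norm_eq_abs] using this
    have hv := variance_nonneg (fun x => |S n x|) ℙ
    rw [variance_eq_sub habs2] at hv
    have he : (ℙ : Measure Ω)[(fun x => |S n x|) ^ 2] = variance (S n) ℙ := by
      rw [variance_of_integral_eq_zero (hSL2 n).aestronglyMeasurable.aemeasurable (hSmean n)]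
      congr 1
      funext x
      simp [sq_abs]
    rw [he] at hv
    calc (∫ x, |S n x| ∂ℙ) ^ 2 ≤ variance (S n) ℙ := by linarith
      _ ≤ C := hSvar n
  have hbdd : ∀ n, eLpNorm (S (n + 1)) 1 ℙ ≤ ((Real.sqrt C).toNNReal : ℝ≥0∞) := by
    intro n
    rw [eLpNorm_one_eq_lintegral_enorm,
      ← ofReal_integral_norm_eq_lintegral_enorm (hSint (n + 1))]
    calc ENNReal.ofReal (∫ x, ‖S (n + 1) x‖ ∂ℙ)
        ≤ ENNReal.ofReal (Real.sqrt C) :=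
          ENNReal.ofReal_le_ofReal (by simpa [Real.norm_eq_abs] using habsle (n + 1))
      _ = ((Real.sqrt C).toNNReal : ℝ≥0∞) := rfl
  -- almost sure convergence of the series
  have hae := hmart.submartingale.exists_ae_tendsto_of_bdd hbdd
  filter_upwards [hae] with ω hω
  obtain ⟨L, hL⟩ := hω
  have hL' : Tendsto (fun n => S n ω) atTop (nhds L) :=
    (tendsto_add_atTop_iff_nat 1).mp hL
  have hL'' : Tendsto (fun n => ∑ k ∈ Finset.range n, (X k ω - c k) / ((k : ℝ) + 1))
      atTop (nhds L) := by
    apply hL'.congr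
    intro n
    apply Finset.sum_congr rfl
    intro k _
    rw [div_eq_inv_mul]
  have hk := my_kronecker hL''
  apply hk.congr
  intro n
  rw [Finset.sum_sub_distrib]
end

section
/- Let {Mₙ}ₙ≥₁ be a sequence of integers with Mₙ ≥ 7 for all n, let {aₙ} be a sequence of integers with 2 < aₙ + 1 < Mₙ, and let K = { Σₙ≥₁ dₙ/(M₁⋯Mₙ) : dₙ ∈ {0,1,...,aₙ+1} }. Suppose there exist c < 5/6 and an infinite set of indices n with (aₙ+1)/Mₙ ≤ c. Then there exists an increasing sequence of positive integers {kⱼ} and a nondegenerate open interval I ⊂ [0,1] such that for all x ∈ K and all j, the fractional part {kⱼ·x} ∉ I. -/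
open Finset

/-- Key estimate: for a digit sequence `d` with `d n ≤ a n + 1 < M n`, multiplying the
Moran series by `∏_{i<m} M i` gives fractional part at most `c + 1/6`, provided
`(a m + 1)/M m ≤ c`. -/
lemma moran_fract_le (M a : ℕ → ℕ) (hM : ∀ n, 7 ≤ M n)
    (ha : ∀ n, a n + 1 < M n) (c : ℝ) (m : ℕ)
    (hm : ((a m : ℝ) + 1) / (M m : ℝ) ≤ c)
    (d : ℕ → ℕ) (hd : ∀ n, d n ≤ a n + 1) (hc : c < 5 / 6) :
    Int.fract ((∏ i ∈ Finset.range m, (M i : ℝ)) *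
      ∑' n : ℕ, (d n : ℝ) / ∏ i ∈ Finset.range (n + 1), (M i : ℝ)) ≤ c + 1 / 6 := by
  set P : ℕ → ℝ := fun n => ∏ i ∈ Finset.range n, (M i : ℝ) with hP
  have hM7 : ∀ n, (7 : ℝ) ≤ (M n : ℝ) := fun n => by exact_mod_cast hM n
  have hMpos : ∀ n, (0 : ℝ) < (M n : ℝ) := fun n => lt_of_lt_of_le (by norm_num) (hM7 n)
  have hPpos : ∀ n, 0 < P n := fun n => Finset.prod_pos fun i _ => hMpos i
  have hP7 : ∀ n, (7 : ℝ) ^ n ≤ P n := by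
    intro n
    calc (7 : ℝ) ^ n = ∏ _i ∈ Finset.range n, (7 : ℝ) := by
          rw [Finset.prod_const, Finset.card_range]
      _ ≤ P n := Finset.prod_le_prod (fun i _ => by norm_num) (fun i _ => hM7 i)
  have hPsucc : ∀ n, P (n + 1) = P n * (M n : ℝ) := fun n => Finset.prod_range_succ _ _
  set f : ℕ → ℝ := fun n => (d n : ℝ) / P (n + 1) with hf
  have hdM : ∀ n, (d n : ℝ) ≤ (M n : ℝ) := by
    intro n
    have : d n ≤ M n := le_trans (hd n) (le_of_lt (ha n))
    exact_mod_cast this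
  have hf_nonneg : ∀ n, 0 ≤ f n := fun n =>
    div_nonneg (Nat.cast_nonneg _) (le_of_lt (hPpos _))
  have hf_le : ∀ n, f n ≤ (1 / 7 : ℝ) ^ n := by
    intro n
    have h1 : f n ≤ 1 / P n := by
      rw [hf]
      simp only
      rw [hPsucc n]
      rw [div_le_div_iff₀ (mul_pos (hPpos n) (hMpos n)) (hPpos n)]
      have := hdM n
      nlinarith [hPpos n, hMpos n]
    calc f n ≤ 1 / P n := h1
      _ ≤ 1 / (7 : ℝ) ^ n := by
          apply one_div_le_one_div_of_le (by positivity) (hP7 n)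
      _ = (1 / 7 : ℝ) ^ n := by rw [one_div_pow]
  have hgeom : Summable fun n : ℕ => (1 / 7 : ℝ) ^ n :=
    summable_geometric_of_lt_one (by norm_num) (by norm_num)
  have hfsum : Summable f := Summable.of_nonneg_of_le hf_nonneg hf_le hgeom
  set g : ℕ → ℝ := fun n => P m * f n with hg
  have hgsum : Summable g := hfsum.mul_left _
  -- tail formula
  have hform : ∀ i, g (i + m) = (d (i + m) : ℝ) / ∏ j ∈ Finset.Ico m (i + m + 1), (M j : ℝ) := by
    intro i
    have hsplit : P m * ∏ j ∈ Finset.Ico m (i + m + 1), (M j : ℝ) = P (i + m + 1) :=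
      Finset.prod_range_mul_prod_Ico _ (by omega)
    have hQpos : 0 < ∏ j ∈ Finset.Ico m (i + m + 1), (M j : ℝ) :=
      Finset.prod_pos fun j _ => hMpos j
    rw [hg]
    simp only
    rw [hf]
    simp only
    rw [← hsplit]
    rw [mul_div_assoc', mul_comm (P m) ((d (i + m) : ℝ)), mul_div_assoc,
      div_mul_cancel_left₀ (hPpos m).ne' _, ← div_eq_mul_inv]
  -- front terms are integers
  have hfront : ∀ n ∈ Finset.range m,
      g n = ((d n * ∏ i ∈ Finset.Ico (n + 1) m, M i : ℕ) : ℝ) := by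
    intro n hn
    have hn' : n + 1 ≤ m := Finset.mem_range.mp hn
    have hsplit : P (n + 1) * ∏ j ∈ Finset.Ico (n + 1) m, (M j : ℝ) = P m :=
      Finset.prod_range_mul_prod_Ico _ hn'
    push_cast
    rw [hg]
    simp only
    rw [hf]
    simp only
    rw [← hsplit]
    rw [mul_comm (P (n + 1)), mul_assoc, mul_div_assoc',
      mul_div_cancel_left₀ _ (hPpos (n + 1)).ne', mul_comm]
  -- tail bound
  set t : ℝ := ∑' i, g (i + m) with ht
  have htail_sum : Summable fun i => g (i + m) := by
    have := (summable_nat_add_iff m).mpr hgsum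
    exact this
  have ht_nonneg : 0 ≤ t :=
    tsum_nonneg fun i => mul_nonneg (le_of_lt (hPpos m)) (hf_nonneg _)
  have hterm0 : g (0 + m) ≤ c := by
    rw [hform 0]
    have hsing : ∏ j ∈ Finset.Ico m (0 + m + 1), (M j : ℝ) = (M m : ℝ) := by
      rw [show 0 + m + 1 = m + 1 by ring, Nat.Ico_succ_singleton, Finset.prod_singleton]
    rw [hsing]
    refine le_trans ((div_le_div_iff_of_pos_right (hMpos m)).mpr ?_) hm
    have h0 := hd m
    rw [Nat.zero_add]
    exact_mod_cast h0
  have hterm_rest : ∀ i : ℕ, g (i + 1 + m) ≤ (1 / 7 : ℝ) ^ (i + 1) := by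
    intro i
    rw [hform (i + 1)]
    have hQ : ∏ j ∈ Finset.Ico m (i + 1 + m + 1), (M j : ℝ) =
        (∏ j ∈ Finset.Ico m (i + 1 + m), (M j : ℝ)) * (M (i + 1 + m) : ℝ) :=
      Finset.prod_Ico_succ_top (by omega) _
    have hQ'pos : 0 < ∏ j ∈ Finset.Ico m (i + 1 + m), (M j : ℝ) :=
      Finset.prod_pos fun j _ => hMpos j
    have hQ'ge : (7 : ℝ) ^ (i + 1) ≤ ∏ j ∈ Finset.Ico m (i + 1 + m), (M j : ℝ) := by
      calc (7 : ℝ) ^ (i + 1) = ∏ _j ∈ Finset.Ico m (i + 1 + m), (7 : ℝ) := by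
            rw [Finset.prod_const, Nat.card_Ico]
            congr 1
            omega
        _ ≤ _ := Finset.prod_le_prod (fun j _ => by norm_num) (fun j _ => hM7 j)
    rw [hQ]
    calc (d (i + 1 + m) : ℝ) / ((∏ j ∈ Finset.Ico m (i + 1 + m), (M j : ℝ)) * (M (i + 1 + m) : ℝ))
        ≤ (M (i + 1 + m) : ℝ) / ((∏ j ∈ Finset.Ico m (i + 1 + m), (M j : ℝ)) * (M (i + 1 + m) : ℝ)) :=
          (div_le_div_iff_of_pos_right (mul_pos hQ'pos (hMpos _))).mpr (hdM _)
      _ = 1 / ∏ j ∈ Finset.Ico m (i + 1 + m), (M j : ℝ) := by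
          rw [mul_comm, div_mul_cancel_left₀ (hMpos _).ne' _, one_div]
      _ ≤ 1 / (7 : ℝ) ^ (i + 1) := one_div_le_one_div_of_le (by positivity) hQ'ge
      _ = (1 / 7 : ℝ) ^ (i + 1) := by rw [one_div_pow]
  have hrest_sum : Summable fun i : ℕ => g (i + 1 + m) := by
    have h1 : Summable fun i : ℕ => g (i + (1 + m)) := (summable_nat_add_iff (1 + m)).mpr hgsum
    have h2 : (fun i : ℕ => g (i + 1 + m)) = fun i : ℕ => g (i + (1 + m)) := by
      funext i; rw [add_assoc]
    rw [h2]; exact h1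
  have hgeom' : Summable fun i : ℕ => (1 / 7 : ℝ) ^ (i + 1) := by
    exact (summable_nat_add_iff 1).mpr hgeom
  have hrest_le : (∑' i : ℕ, g (i + 1 + m)) ≤ 1 / 6 := by
    calc (∑' i : ℕ, g (i + 1 + m)) ≤ ∑' i : ℕ, (1 / 7 : ℝ) ^ (i + 1) :=
          Summable.tsum_le_tsum hterm_rest hrest_sum hgeom'
      _ = (1 / 7 : ℝ) * ∑' i : ℕ, (1 / 7 : ℝ) ^ i := by
          rw [← tsum_mul_left]
          congr 1 with i
          ring
      _ = 1 / 6 := by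
          rw [tsum_geometric_of_lt_one (by norm_num) (by norm_num)]
          norm_num
  have htle : t ≤ c + 1 / 6 := by
    have : t = g (0 + m) + ∑' i : ℕ, g (i + 1 + m) := by
      rw [ht, ← Summable.sum_add_tsum_nat_add 1 htail_sum]
      simp
    rw [this]
    have h0 := hterm0
    linarith
  have htlt1 : t < 1 := lt_of_le_of_lt htle (by linarith)
  -- put it together
  have hx : P m * ∑' n, f n = (↑(∑ n ∈ Finset.range m, d n * ∏ i ∈ Finset.Ico (n + 1) m, M i) : ℝ) + t := by
    rw [← tsum_mul_left]
    rw [← Summable.sum_add_tsum_nat_add m hgsum]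
    congr 1
    rw [Nat.cast_sum]
    exact Finset.sum_congr rfl fun n hn => hfront n hn
  rw [show (∏ i ∈ Finset.range m, (M i : ℝ)) = P m from rfl, hx]
  rw [Int.fract_natCast_add]
  rw [Int.fract_eq_self.mpr ⟨ht_nonneg, htlt1⟩]
  exact htle

/-- A homogeneous Moran set with mixed radix bases `Mₙ ≥ 7` and digit sets
`{0, 1, …, aₙ + 1}` such that `(aₙ+1)/Mₙ ≤ c < 5/6` along an infinite set of
indices avoids a fixed nondegenerate open subinterval of `[0,1]` under the
fractional parts `{kⱼ x}` for a suitable increasing sequence `kⱼ` of positive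
integers. -/
theorem stmt18 (M a : ℕ → ℕ) (hM : ∀ n, 7 ≤ M n)
    (ha : ∀ n, 2 < a n + 1 ∧ a n + 1 < M n)
    (c : ℝ) (hc : c < 5 / 6)
    (hinf : ∀ N : ℕ, ∃ n, N ≤ n ∧ ((a n : ℝ) + 1) / (M n : ℝ) ≤ c)
    (K : Set ℝ)
    (hK : K = {x : ℝ | ∃ d : ℕ → ℕ, (∀ n, d n ≤ a n + 1) ∧
      x = ∑' n : ℕ, (d n : ℝ) / ∏ i ∈ Finset.range (n + 1), (M i : ℝ)}) :
    ∃ (k : ℕ → ℕ) (α β : ℝ), StrictMono k ∧ (∀ j, 0 < k j) ∧ α < β ∧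
      Set.Ioo α β ⊆ Set.Icc (0 : ℝ) 1 ∧
      ∀ x ∈ K, ∀ j, Int.fract ((k j : ℝ) * x) ∉ Set.Ioo α β := by
  -- c is nonnegative
  have hc0 : 0 < c := by
    obtain ⟨n, -, hn⟩ := hinf 0
    have hMpos : (0 : ℝ) < (M n : ℝ) := by
      have := hM n; positivity
    have : (0 : ℝ) < ((a n : ℝ) + 1) / (M n : ℝ) := by positivity
    linarith
  -- choose the subsequence
  choose g hg1 hg2 using hinf
  set nseq : ℕ → ℕ := fun j => Nat.rec (g 0) (fun _ prev => g (prev + 1)) j with hnseq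
  have hnseq_succ : ∀ j, nseq (j + 1) = g (nseq j + 1) := fun j => rfl
  have hnseq_mono : StrictMono nseq := by
    apply strictMono_nat_of_lt_succ
    intro j
    rw [hnseq_succ]
    have := hg1 (nseq j + 1)
    omega
  have hnseq_prop : ∀ j, ((a (nseq j) : ℝ) + 1) / (M (nseq j) : ℝ) ≤ c := by
    intro j
    cases j with
    | zero => exact hg2 0
    | succ i => exact hg2 (nseq i + 1)
  refine ⟨fun j => ∏ i ∈ Finset.range (nseq j), M i, c + 1 / 6, 1, ?_, ?_, ?_, ?_, ?_⟩
  · -- StrictMono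
    intro i j hij
    have h1 : nseq i < nseq j := hnseq_mono hij
    have hpos : 0 < ∏ i ∈ Finset.range (nseq i), M i :=
      Finset.prod_pos fun i _ => by have := hM i; omega
    calc ∏ l ∈ Finset.range (nseq i), M l
        < (∏ l ∈ Finset.range (nseq i), M l) * ∏ l ∈ Finset.Ico (nseq i) (nseq j), M l := by
          have h2 : 2 ≤ ∏ l ∈ Finset.Ico (nseq i) (nseq j), M l := by
            calc 2 ≤ 7 ^ (nseq j - nseq i) := by
                  have : 1 ≤ nseq j - nseq i := by omega
                  calc 2 ≤ 7 ^ 1 := by norm_num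
                    _ ≤ 7 ^ (nseq j - nseq i) := Nat.pow_le_pow_right (by norm_num) this
              _ = ∏ _l ∈ Finset.Ico (nseq i) (nseq j), 7 := by
                  rw [Finset.prod_const, Nat.card_Ico]
              _ ≤ _ := Finset.prod_le_prod' fun l _ => hM l
          exact lt_mul_iff_one_lt_right hpos |>.mpr (by omega)
      _ = ∏ l ∈ Finset.range (nseq j), M l :=
          Finset.prod_range_mul_prod_Ico _ (le_of_lt h1)
  · -- positivity
    intro j
    exact Finset.prod_pos fun i _ => by have := hM i; omega
  · linarith
  · intro y hy
    obtain ⟨hy1, hy2⟩ := hy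
    constructor
    · linarith
    · linarith
  · intro x hx j
    rw [hK] at hx
    obtain ⟨d, hd, rfl⟩ := hx
    intro hmem
    obtain ⟨h1, h2⟩ := hmem
    have hcast : ((∏ i ∈ Finset.range (nseq j), M i : ℕ) : ℝ) =
        ∏ i ∈ Finset.range (nseq j), (M i : ℝ) := by push_cast; rfl
    have key := moran_fract_le M a hM (fun n => (ha n).2) c (nseq j)
      (hnseq_prop j) d hd hc
    rw [hcast] at h1
    linarith
end
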